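/- For every μ > 0 and every λ > 0, ∫_0^∞ e^{−λt} q^μ(t) dt = 1/(√λ + μ). -/

import Mathlib

open MeasureTheory

/-- The complementary error function `erfc(s) = (2/√π) ∫_s^∞ e^{−τ²} dτ`. -/
noncomputable def erfc (s : ℝ) : ℝ :=
  (2 / Real.sqrt Real.pi) * ∫ τ in Set.Ioi s, Real.exp (-τ ^ 2)

/-- `q^μ(t) = t^{-1/2}/√π − μ e^{μ²t} erfc(μ√t)`. -/
noncomputable def qFun (μ t : ℝ) : ℝ :=
  t ^ (-(1 : ℝ) / 2) / Real.sqrt Real.pi - μ * Real.exp (μ ^ 2 * t) * erfc (μ * Real.sqrt t)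

open Set Real

lemma lapA (l : ℝ) (hl : 0 < l) :
    ∫ t in Ioi (0:ℝ), Real.exp (-l*t) * (t ^ (-(1:ℝ)/2) / Real.sqrt π) = 1 / Real.sqrt l := by
  have h := Real.integral_rpow_mul_exp_neg_mul_Ioi (a := 1/2) (r := l) (by norm_num) hl
  have h2 : ∫ t in Ioi (0:ℝ), Real.exp (-l*t) * (t ^ (-(1:ℝ)/2) / Real.sqrt π)
      = (∫ t in Ioi (0:ℝ), t ^ ((1:ℝ)/2 - 1) * Real.exp (-(l*t))) * (Real.sqrt π)⁻¹ := by
    rw [← integral_mul_const]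
    refine setIntegral_congr_fun measurableSet_Ioi (fun t ht => ?_)
    rw [neg_mul]
    ring_nf
  have h3 : ((1:ℝ)/l) ^ ((1:ℝ)/2) = 1/Real.sqrt l := by
    rw [← Real.sqrt_eq_rpow, one_div, Real.sqrt_inv, one_div]
  rw [h2, h, Real.Gamma_one_half_eq, mul_assoc,
    mul_inv_cancel₀ (by positivity : Real.sqrt π ≠ 0), mul_one, h3]

lemma sqmom : ∫ τ in Ioi (0:ℝ), τ^2 * Real.exp (-τ^2) = Real.sqrt π / 4 := by
  have h := MeasureTheory.integral_comp_rpow_Ioi (fun y => y ^ ((1:ℝ)/2) * Real.exp (-y)) (p := 2) two_ne_zero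
  have hg := Real.integral_rpow_mul_exp_neg_mul_Ioi (a := 3/2) (r := 1) (by norm_num) one_pos
  have hG : Real.Gamma (3/2) = Real.sqrt π / 2 := by
    have : (3/2 : ℝ) = 1/2 + 1 := by norm_num
    rw [this, Real.Gamma_add_one (by norm_num), Real.Gamma_one_half_eq]
    ring
  have h2 : ∫ x in Ioi (0:ℝ), (|(2:ℝ)| * x ^ ((2:ℝ) - 1)) • ((x ^ (2:ℝ)) ^ ((1:ℝ)/2) * Real.exp (-(x ^ (2:ℝ))))
      = ∫ x in Ioi (0:ℝ), 2 * (x^2 * Real.exp (-x^2)) := by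
    refine setIntegral_congr_fun measurableSet_Ioi (fun x hx => ?_)
    have hx0 : (0:ℝ) < x := hx
    have e1 : x ^ (2:ℝ) = x ^ 2 := by
      rw [show (2:ℝ) = ((2:ℕ):ℝ) by norm_num, Real.rpow_natCast]
    have e2 : (x ^ (2:ℝ)) ^ ((1:ℝ)/2) = x := by
      rw [← Real.rpow_mul hx0.le]
      norm_num
    rw [smul_eq_mul, e2, e1]
    have e3 : x ^ ((2:ℝ) - 1) = x := by norm_num
    rw [e3, abs_of_nonneg (by norm_num : (0:ℝ) ≤ 2)]
    ring
  rw [h2] at h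
  rw [integral_const_mul] at h
  have h3 : ∫ y in Ioi (0:ℝ), y ^ ((1:ℝ)/2) * Real.exp (-y)
      = Real.sqrt π / 2 := by
    have : ∀ y : ℝ, y ^ ((1:ℝ)/2) * Real.exp (-y) = y ^ ((3:ℝ)/2 - 1) * Real.exp (-(1*y)) := by
      intro y; norm_num
    simp_rw [this]
    rw [hg, hG]
    norm_num
  rw [h3] at h
  linarith

lemma intExp (c b : ℝ) (hc : c ≠ 0) :
    ∫ t in (0:ℝ)..b, Real.exp (c*t) = (Real.exp (c*b) - 1)/c := by
  have h : ∀ t : ℝ, HasDerivAt (fun t => Real.exp (c*t)/c) (Real.exp (c*t)) t := by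
    intro t
    have := ((hasDerivAt_id t).const_mul c).exp
    simpa [mul_comm] using this.div_const c |>.congr_deriv (by field_simp; simp)
  rw [intervalIntegral.integral_eq_sub_of_hasDerivAt (fun t _ => h t)
    ((Real.continuous_exp.comp (continuous_const.mul continuous_id)).intervalIntegrable 0 b)]
  simp
  ring

/-- For `μ > 0`, `λ > 0`: `∫_0^∞ e^{−λt} q^μ(t) dt = 1/(√λ + μ)`. -/
theorem stmt4 (μ l : ℝ) (hμ : 0 < μ) (hl : 0 < l) :
    (∫ t in Set.Ioi (0 : ℝ), Real.exp (-l * t) * qFun μ t) =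
      1 / (Real.sqrt l + μ) := by
  set c : ℝ := μ^2 - l with hc
  set F : ℝ → ℝ → ℝ := fun t τ => if μ * Real.sqrt t < τ then Real.exp (c*t - τ^2) else 0 with hF
  set ν : Measure ℝ := volume.restrict (Ioi 0) with hν
  -- measurability
  have hFmeas : Measurable (Function.uncurry F) := by
    have : Function.uncurry F = fun p : ℝ × ℝ =>
        if μ * Real.sqrt p.1 < p.2 then Real.exp (c*p.1 - p.2^2) else 0 := rfl
    rw [this]
    refine Measurable.ite ?_ ?_ measurable_const
    · exact measurableSet_lt ((Real.continuous_sqrt.measurable.comp measurable_fst).const_mul μ) measurable_snd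
    · exact Real.measurable_exp.comp ((measurable_fst.const_mul c).sub (measurable_snd.pow_const 2))
  -- integrability on the product
  set θ : ℝ := l/(l+μ^2) with hθdef
  have hθ : (0:ℝ) < θ := by positivity
  have hθ1 : θ < 1 := (div_lt_one (by positivity)).2 (by nlinarith)
  have hl2 : 0 < l - θ*μ^2 := by
    have : θ * μ^2 < l := by
      rw [hθdef, div_mul_eq_mul_div, div_lt_iff₀ (by positivity)]
      nlinarith
    linarith
  have hG : Integrable (fun p : ℝ×ℝ => Real.exp (-(l - θ*μ^2) * p.1) * Real.exp (-θ * p.2^2)) (ν.prod ν) :=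
    Integrable.mul_prod (exp_neg_integrableOn_Ioi 0 hl2) ((integrable_exp_neg_mul_sq hθ).integrableOn)
  have hFint : Integrable (Function.uncurry F) (ν.prod ν) := by
    refine hG.mono' hFmeas.aestronglyMeasurable (ae_of_all _ fun p => ?_)
    rcases p with ⟨t, τ⟩
    show ‖F t τ‖ ≤ _
    rw [hF]
    simp only
    split_ifs with h
    · rw [Real.norm_eq_abs, abs_of_nonneg (Real.exp_pos _).le, ← Real.exp_add]
      apply Real.exp_le_exp.2
      rw [hc]
      have h2 : μ^2 * t ≤ τ^2 := by
        rcases le_or_gt 0 t with ht | ht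
        · have h3 : 0 ≤ μ * Real.sqrt t := by positivity
          have h4 := mul_nonneg (sub_nonneg.2 h.le) (by linarith : 0 ≤ τ + μ * Real.sqrt t)
          nlinarith [Real.sq_sqrt ht]
        · nlinarith [sq_nonneg τ, mul_pos hμ hμ]
      nlinarith [mul_nonneg (sub_nonneg.2 hθ1.le) (sub_nonneg.2 h2)]
    · simp only [norm_zero]
      positivity
  -- inner integral (as a function of t)
  have h_inner : ∀ t : ℝ, (∫ τ, F t τ ∂ν)
      = Real.exp (c*t) * ∫ τ in Ioi (μ * Real.sqrt t), Real.exp (-τ^2) := by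
    intro t
    have h1 : (fun τ => F t τ) = Set.indicator (Ioi (μ * Real.sqrt t)) (fun τ => Real.exp (c*t - τ^2)) := by
      ext τ
      simp only [hF, Set.indicator, mem_Ioi]
    rw [hν, h1, setIntegral_indicator measurableSet_Ioi, Set.Ioi_inter_Ioi,
        sup_eq_right.mpr (by positivity : (0:ℝ) ≤ μ * Real.sqrt t)]
    rw [← integral_const_mul]
    refine setIntegral_congr_fun measurableSet_Ioi fun τ _ => ?_
    rw [← Real.exp_add]
    ring_nf
  -- second piece equals a constant times the inner integral
  have hBeq : ∀ t : ℝ, Real.exp (-l*t) * (μ * Real.exp (μ^2*t) * erfc (μ * Real.sqrt t))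
      = (2*μ/Real.sqrt π) * ∫ τ, F t τ ∂ν := by
    intro t
    rw [h_inner t]
    unfold erfc
    rw [show Real.exp (c*t) = Real.exp (-l*t) * Real.exp (μ^2*t) by
      rw [← Real.exp_add]; congr 1; rw [hc]; ring]
    ring
  have hBint : Integrable (fun t => Real.exp (-l*t) * (μ * Real.exp (μ^2*t) * erfc (μ * Real.sqrt t))) ν := by
    simp_rw [hBeq]
    exact (hFint.integral_prod_left).const_mul _
  have hAint : Integrable (fun t : ℝ => Real.exp (-l*t) * (t ^ (-(1:ℝ)/2) / Real.sqrt π)) ν := by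
    have h := integrableOn_rpow_mul_exp_neg_mul_rpow (p := 1) (s := -(1:ℝ)/2) (b := l)
      (by norm_num) zero_lt_one hl
    have h2 := h.mul_const (Real.sqrt π)⁻¹
    rw [hν]
    refine (integrableOn_congr_fun (fun x hx => ?_) measurableSet_Ioi).1 h2
    rw [Real.rpow_one]
    ring
  -- split the integral
  have hsplit : (∫ t in Set.Ioi (0 : ℝ), Real.exp (-l * t) * qFun μ t)
      = (∫ t in Ioi (0:ℝ), Real.exp (-l*t) * (t ^ (-(1:ℝ)/2) / Real.sqrt π))
        - ∫ t, Real.exp (-l*t) * (μ * Real.exp (μ^2*t) * erfc (μ * Real.sqrt t)) ∂ν := by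
    rw [hν, ← integral_sub hAint hBint]
    refine setIntegral_congr_fun measurableSet_Ioi fun t _ => ?_
    unfold qFun
    ring
  -- swap the double integral
  have hswap : (∫ t, (∫ τ, F t τ ∂ν) ∂ν) = ∫ τ, (∫ t, F t τ ∂ν) ∂ν :=
    integral_integral_swap hFint
  -- outer integral computation
  have h_outer : ∀ τ : ℝ, τ ∈ Ioi (0:ℝ) → (∫ t, F t τ ∂ν)
      = Real.exp (-τ^2) * ∫ t in (0:ℝ)..((τ/μ)^2), Real.exp (c*t) := by
    intro τ hτ
    have hτ0 : (0:ℝ) < τ := hτ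
    have hb : (0:ℝ) < (τ/μ)^2 := by positivity
    have h1 : (∫ t, F t τ ∂ν) = ∫ t in Ioo (0:ℝ) ((τ/μ)^2), Real.exp (c*t - τ^2) := by
      rw [hν]
      have heq : ∀ t ∈ Ioi (0:ℝ), F t τ
          = Set.indicator (Iio ((τ/μ)^2)) (fun t => Real.exp (c*t - τ^2)) t := by
        intro t ht
        have hiff : μ * Real.sqrt t < τ ↔ t < (τ/μ)^2 := by
          rw [mul_comm, ← lt_div_iff₀ hμ, Real.sqrt_lt' (by positivity)]
        simp only [hF, Set.indicator, mem_Iio, hiff]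
      rw [setIntegral_congr_fun measurableSet_Ioi heq,
          setIntegral_indicator measurableSet_Iio, Set.Ioi_inter_Iio]
    rw [h1, ← MeasureTheory.integral_Ioc_eq_integral_Ioo,
        ← intervalIntegral.integral_of_le hb.le, ← intervalIntegral.integral_const_mul]
    refine intervalIntegral.integral_congr fun t _ => ?_
    rw [← Real.exp_add]
    ring_nf
  have hT : (∫ t, (∫ τ, F t τ ∂ν) ∂ν)
      = ∫ τ in Ioi (0:ℝ), Real.exp (-τ^2) * ∫ t in (0:ℝ)..((τ/μ)^2), Real.exp (c*t) := by
    rw [hswap, hν]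
    exact setIntegral_congr_fun measurableSet_Ioi h_outer
  -- put everything together
  have hBval : (∫ t, Real.exp (-l*t) * (μ * Real.exp (μ^2*t) * erfc (μ * Real.sqrt t)) ∂ν)
      = (2*μ/Real.sqrt π) *
        ∫ τ in Ioi (0:ℝ), Real.exp (-τ^2) * ∫ t in (0:ℝ)..((τ/μ)^2), Real.exp (c*t) := by
    simp_rw [hBeq]
    rw [integral_const_mul, hT]
  rw [hsplit, lapA l hl, hBval]
  -- now compute the remaining Gaussian integral, splitting on c = 0
  set s : ℝ := Real.sqrt l with hs
  have hs0 : 0 < s := Real.sqrt_pos.2 hl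
  have hs2 : s^2 = l := Real.sq_sqrt hl.le
  have hπ : (0:ℝ) < Real.sqrt π := by positivity
  rcases eq_or_ne c 0 with hc0 | hc0
  · -- c = 0 : l = μ²
    have hlμ : l = μ^2 := by rw [hc] at hc0; linarith [hc0]
    have hsμ : s = μ := by rw [hs, hlμ, Real.sqrt_sq hμ.le]
    have hE : ∀ τ : ℝ, (∫ t in (0:ℝ)..((τ/μ)^2), Real.exp (c*t)) = (τ/μ)^2 := by
      intro τ
      simp [hc0]
    have hval : (∫ τ in Ioi (0:ℝ), Real.exp (-τ^2) * ∫ t in (0:ℝ)..((τ/μ)^2), Real.exp (c*t))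
        = (μ^2)⁻¹ * (Real.sqrt π / 4) := by
      simp_rw [hE]
      rw [← sqmom, ← integral_const_mul]
      refine setIntegral_congr_fun measurableSet_Ioi fun τ _ => ?_
      rw [div_pow]
      field_simp
    rw [hval, hsμ]
    field_simp
    ring
  · -- c ≠ 0
    have hk : (0:ℝ) < l/μ^2 := by positivity
    have hE : ∀ τ : ℝ, Real.exp (-τ^2) * (∫ t in (0:ℝ)..((τ/μ)^2), Real.exp (c*t))
        = c⁻¹ * (Real.exp (-(l/μ^2) * τ^2) - Real.exp (-1 * τ^2)) := by
      intro τ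
      rw [intExp c _ hc0]
      have he : -(l/μ^2) * τ^2 = c * (τ/μ)^2 + -τ^2 := by
        rw [hc]; field_simp; ring
      rw [he, Real.exp_add, show (-1:ℝ) * τ^2 = -τ^2 by ring]
      field_simp
    have hval : (∫ τ in Ioi (0:ℝ), Real.exp (-τ^2) * ∫ t in (0:ℝ)..((τ/μ)^2), Real.exp (c*t))
        = c⁻¹ * (Real.sqrt (π/(l/μ^2))/2 - Real.sqrt (π/1)/2) := by
      simp_rw [hE]
      rw [integral_const_mul, integral_sub ((integrable_exp_neg_mul_sq hk).integrableOn)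
        ((integrable_exp_neg_mul_sq one_pos).integrableOn),
        integral_gaussian_Ioi, integral_gaussian_Ioi]
    rw [hval]
    have hsq1 : Real.sqrt (π/(l/μ^2)) = μ * Real.sqrt π / s := by
      rw [show π/(l/μ^2) = μ^2 * (π/l) by field_simp, Real.sqrt_mul (sq_nonneg μ),
        Real.sqrt_sq hμ.le, Real.sqrt_div Real.pi_pos.le, hs, mul_div_assoc]
    have hsq2 : Real.sqrt (π/1) = Real.sqrt π := by norm_num
    rw [hsq1, hsq2]
    have hc' : c = μ^2 - s^2 := by rw [hc, hs2]
    have hcs : μ^2 - s^2 ≠ 0 := by rw [← hc']; exact hc0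
    rw [hc']
    have hsum : s + μ ≠ 0 := by positivity
    field_simp
    ring
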